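/- Fix a finite set V with |V| = n and t ∈ {1, …, n−1}, and let x : V × V → {0,1} be symmetric with x(i,i) = 0 for all i and satisfying x(i,j) + x(j,k) ≥ x(i,k) for all i,j,k ∈ V. Then x satisfies the constraints Σ_{i,j ∈ S} x(i,j) ≥ 2 for every S ⊆ V with |S| = t + 1 if and only if x satisfies the constraints Σ_{j ∈ S} x(i,j) ≥ |S| − t for every S ⊆ V and every i ∈ S. -/

import Mathlib

/-- For a 0/1 symmetric function `x` with zero diagonal satisfying the triangle
constraints, the spreading constraints `Σ_{i,j ∈ S} x i j ≥ 2` over all `S ⊆ V` with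
`|S| = t + 1` are equivalent to the constraints `Σ_{j ∈ S} x i j ≥ |S| - t` over all
`S ⊆ V` and `i ∈ S`. -/
theorem statement7 {V : Type*} [Fintype V] [DecidableEq V] (n t : ℕ)
    (hn : Fintype.card V = n) (ht1 : 1 ≤ t) (ht2 : t ≤ n - 1)
    (x : V → V → ℝ) (hbin : ∀ i j : V, x i j = 0 ∨ x i j = 1)
    (hsymm : ∀ i j : V, x i j = x j i) (hdiag : ∀ i : V, x i i = 0)
    (htri : ∀ i j k : V, x i k ≤ x i j + x j k) :
    (∀ S : Finset V, S.card = t + 1 → (2 : ℝ) ≤ ∑ i ∈ S, ∑ j ∈ S, x i j) ↔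
      (∀ S : Finset V, ∀ i ∈ S, (S.card : ℝ) - t ≤ ∑ j ∈ S, x i j) := by
  have hnonneg : ∀ i j : V, 0 ≤ x i j := by
    intro i j; rcases hbin i j with h | h <;> simp [h]
  constructor
  · intro h S i hiS
    set C := Finset.univ.filter (fun j => x i j = 0) with hCdef
    have hCt : C.card ≤ t := by
      by_contra hlt
      push_neg at hlt
      obtain ⟨T, hTC, hTcard⟩ := Finset.exists_subset_card_eq (s := C) (n := t + 1) hlt
      have hzero : ∀ a ∈ T, ∀ b ∈ T, x a b = 0 := by
        intro a ha b hb
        have ha' : x i a = 0 := by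
          have := hTC ha; simp [hCdef, Finset.mem_filter] at this; exact this
        have hb' : x i b = 0 := by
          have := hTC hb; simp [hCdef, Finset.mem_filter] at this; exact this
        have hle : x a b ≤ x a i + x i b := htri a i b
        have : x a i = 0 := by rw [hsymm]; exact ha'
        have h0 : x a b ≤ 0 := by linarith
        linarith [hnonneg a b]
      have := h T hTcard
      have hsum0 : ∑ a ∈ T, ∑ b ∈ T, x a b = 0 := by
        apply Finset.sum_eq_zero
        intro a ha
        exact Finset.sum_eq_zero (fun b hb => hzero a ha b hb)
      rw [hsum0] at this
      linarith
    have hsplit : (S.filter (fun j => x i j = 0)).card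
        + (S.filter (fun j => ¬ x i j = 0)).card = S.card :=
      Finset.card_filter_add_card_filter_not _
    have hsub : S.filter (fun j => x i j = 0) ⊆ C := by
      intro j hj
      simp [hCdef, Finset.mem_filter]
      exact (Finset.mem_filter.mp hj).2
    have hcard1 : (S.filter (fun j => x i j = 0)).card ≤ t :=
      le_trans (Finset.card_le_card hsub) hCt
    have hge : ((S.filter (fun j => ¬ x i j = 0)).card : ℝ) ≤ ∑ j ∈ S, x i j := by
      rw [← Finset.sum_filter_add_sum_filter_not S (fun j => x i j = 0) (x i)]
      have h1 : ∑ j ∈ S.filter (fun j => x i j = 0), x i j = 0 :=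
        Finset.sum_eq_zero (fun j hj => (Finset.mem_filter.mp hj).2)
      have h2 : ∑ j ∈ S.filter (fun j => ¬ x i j = 0), x i j
          = ((S.filter (fun j => ¬ x i j = 0)).card : ℝ) := by
        rw [Finset.sum_congr rfl (fun j hj => by
          rcases hbin i j with h | h
          · exact absurd h (Finset.mem_filter.mp hj).2
          · exact h)]
        simp
      rw [h1, h2]; linarith
    have : S.card ≤ t + (S.filter (fun j => ¬ x i j = 0)).card := by omega
    have hcast : (S.card : ℝ) ≤ (t : ℝ) + ((S.filter (fun j => ¬ x i j = 0)).card : ℝ) := by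
      exact_mod_cast this
    linarith
  · intro h S hScard
    have hrow : ∀ i ∈ S, (1 : ℝ) ≤ ∑ j ∈ S, x i j := by
      intro i hi
      have := h S i hi
      rw [hScard] at this
      push_cast at this
      linarith
    have : ((t : ℝ) + 1) * 1 ≤ ∑ i ∈ S, ∑ j ∈ S, x i j := by
      have := Finset.sum_le_sum hrow
      simpa [hScard, mul_comm] using this
    have ht : (1 : ℝ) ≤ (t : ℝ) := by exact_mod_cast ht1
    linarith
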